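/- arXiv:cs/0703076 — 4 statements merged into one kernel-verified Lean document; each statement's English description precedes it below -/
import Mathlib

section
/- For every integer interval i = [a,b] with a ≤ b, every interval affine form l = [a₀,b₀] + Σₖ [aₖ,bₖ]×Vₖ over ℤ, and every environment ρ : 𝒱 → ℤ, the symbolic multiplication i ⊠ l := (i ×ᴵ [a₀,b₀]) + Σₖ (i ×ᴵ [aₖ,bₖ])×Vₖ is sound: { x·y | x ∈ ℤ, a ≤ x ≤ b, y ∈ ⟦l⟧(ρ) } ⊆ ⟦i ⊠ l⟧(ρ). -/
/-- Semantics of the interval affine form `[a₀,b₀] + Σₖ [aₖ,bₖ]×Vₖ` over ℤ in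
the environment `ρ`: `{ c₀ + Σₖ cₖ·ρ(Vₖ) | ∀j, cⱼ ∈ ℤ, aⱼ ≤ cⱼ ≤ bⱼ }`. -/
def asemZ {n : ℕ} (a₀ b₀ : ℤ) (a b : Fin n → ℤ) (ρ : Fin n → ℤ) : Set ℤ :=
  {x | ∃ (c₀ : ℤ) (c : Fin n → ℤ),
        (a₀ ≤ c₀ ∧ c₀ ≤ b₀) ∧ (∀ k, a k ≤ c k ∧ c k ≤ b k) ∧
        x = c₀ + ∑ k, c k * ρ k}

/-- Lower bound of the integer interval product `[a,b] ×ᴵ [a',b']`. -/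
def imulLoZ (a b a' b' : ℤ) : ℤ :=
  min (min (a * a') (a * b')) (min (b * a') (b * b'))

/-- Upper bound of the integer interval product `[a,b] ×ᴵ [a',b']`. -/
def imulHiZ (a b a' b' : ℤ) : ℤ :=
  max (max (a * a') (a * b')) (max (b * a') (b * b'))

lemma imul_bounds (α β c d x y : ℤ) (h1 : α ≤ x) (h2 : x ≤ β)
    (h3 : c ≤ y) (h4 : y ≤ d) :
    imulLoZ α β c d ≤ x * y ∧ x * y ≤ imulHiZ α β c d := by
  unfold imulLoZ imulHiZ
  rcases le_total 0 y with hy | hy <;> rcases le_total 0 α with hα | hα <;>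
    rcases le_total 0 β with hβ | hβ <;>
    constructor <;> simp only [le_min_iff, min_le_iff, le_max_iff, max_le_iff] <;>
    [skip; skip; skip; skip; skip; skip; skip; skip; skip; skip; skip; skip;
     skip; skip; skip; skip] <;>
    first
      | (left; left; nlinarith)
      | (left; right; nlinarith)
      | (right; left; nlinarith)
      | (right; right; nlinarith)

/-- over ℤ, the symbolic multiplication `i ⊠ l` of an interval
affine form `l` by an integer interval `i = [α,β]`, obtained by multiplying
every constant and coefficient interval of `l` by `i` using interval
multiplication, is sound:
`{ x·y | x ∈ ℤ, α ≤ x ≤ β, y ∈ ⟦l⟧(ρ) } ⊆ ⟦i ⊠ l⟧(ρ)`. -/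
theorem affine_smul_sound_int {n : ℕ} (α β a₀ b₀ : ℤ) (a b : Fin n → ℤ)
    (hi : α ≤ β) (h₀ : a₀ ≤ b₀) (h : ∀ k, a k ≤ b k) (ρ : Fin n → ℤ) :
    {z | ∃ x : ℤ, α ≤ x ∧ x ≤ β ∧ ∃ y ∈ asemZ a₀ b₀ a b ρ, z = x * y} ⊆
      asemZ (imulLoZ α β a₀ b₀) (imulHiZ α β a₀ b₀)
        (fun k => imulLoZ α β (a k) (b k))
        (fun k => imulHiZ α β (a k) (b k)) ρ := by
  rintro z ⟨x, hx1, hx2, y, ⟨c₀, c, ⟨hc01, hc02⟩, hc, rfl⟩, rfl⟩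
  refine ⟨x * c₀, fun k => x * c k, ⟨?_, ?_⟩, fun k => ?_, ?_⟩
  · exact (imul_bounds α β a₀ b₀ x c₀ hx1 hx2 hc01 hc02).1
  · exact (imul_bounds α β a₀ b₀ x c₀ hx1 hx2 hc01 hc02).2
  · exact imul_bounds α β (a k) (b k) x (c k) hx1 hx2 (hc k).1 (hc k).2
  · rw [mul_add, Finset.mul_sum]
    ring_nf
end

section
/- Linearization is sound: let B assign to each variable Vₖ a real interval [loₖ, hiₖ] with loₖ ≤ hiₖ, and define the linearization ⌊e⌋(B) of an expression e by structural induction: ⌊V⌋(B) = [1,1]×V; ⌊[a,b]⌋(B) = [a,b]; ⌊e₁+e₂⌋(B) = ⌊e₁⌋(B) ⊞ ⌊e₂⌋(B); ⌊e₁−e₂⌋(B) = ⌊e₁⌋(B) ⊟ ⌊e₂⌋(B); ⌊e₁/e₂⌋(B) = ⌊e₁⌋(B) ⊘ ι(⌊e₂⌋(B))(B); ⌊e₁×e₂⌋(B) = ι(⌊e₁⌋(B))(B) ⊠ ⌊e₂⌋(B). Then for every expression e and every environment ρ : 𝒱 → ℝ with loₖ ≤ ρ(Vₖ) ≤ hiₖ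 for all k, one has ⟦e⟧(ρ) ⊆ ⟦⌊e⌋(B)⟧(ρ). -/
open scoped Classical

/-- Arithmetic expressions over the variables `V₁,…,Vₙ`:
`e ::= Vₖ | [a,b] | e+e | e−e | e×e | e/e`. -/
inductive Expr (n : ℕ) where
  | var : Fin n → Expr n
  | itv : ℝ → ℝ → Expr n
  | add : Expr n → Expr n → Expr n
  | sub : Expr n → Expr n → Expr n
  | mul : Expr n → Expr n → Expr n
  | div : Expr n → Expr n → Expr n

/-- Set-valued concrete semantics of expressions. -/
def sem {n : ℕ} : Expr n → (Fin n → ℝ) → Set ℝ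
  | .var X, ρ => {ρ X}
  | .itv a b, _ => Set.Icc a b
  | .add e₁ e₂, ρ => {z | ∃ x ∈ sem e₁ ρ, ∃ y ∈ sem e₂ ρ, z = x + y}
  | .sub e₁ e₂, ρ => {z | ∃ x ∈ sem e₁ ρ, ∃ y ∈ sem e₂ ρ, z = x - y}
  | .mul e₁ e₂, ρ => {z | ∃ x ∈ sem e₁ ρ, ∃ y ∈ sem e₂ ρ, z = x * y}
  | .div e₁ e₂, ρ => {z | ∃ x ∈ sem e₁ ρ, ∃ y ∈ sem e₂ ρ, y ≠ 0 ∧ z = x / y}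

/-- An interval with extended-real bounds (`[−∞,+∞]` coefficients are allowed,
so that dividing by an interval containing `0` yields the unconstrained form). -/
abbrev EItv : Type := EReal × EReal

/-- Interval addition `[a,b] +ᴵ [a',b'] = [a+a', b+b']`. -/
noncomputable def iadd (p q : EItv) : EItv := (p.1 + q.1, p.2 + q.2)

/-- Interval subtraction `[a,b] −ᴵ [a',b'] = [a−b', b−a']`. -/
noncomputable def isub (p q : EItv) : EItv := (p.1 - q.2, p.2 - q.1)

/-- Interval multiplication
`[a,b] ×ᴵ [a',b'] = [min(aa',ab',ba',bb'), max(aa',ab',ba',bb')]`. -/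
noncomputable def imul (p q : EItv) : EItv :=
  (min (min (p.1 * q.1) (p.1 * q.2)) (min (p.2 * q.1) (p.2 * q.2)),
   max (max (p.1 * q.1) (p.1 * q.2)) (max (p.2 * q.1) (p.2 * q.2)))

/-- Interval division: the whole line `[−∞,+∞]` when `0` lies in the
denominator interval, and
`[min(a/a',a/b',b/a',b/b'), max(a/a',a/b',b/a',b/b')]` otherwise. -/
noncomputable def idiv (p q : EItv) : EItv :=
  if q.1 ≤ 0 ∧ 0 ≤ q.2 then (⊥, ⊤)
  else
    (min (min (p.1 / q.1) (p.1 / q.2)) (min (p.2 / q.1) (p.2 / q.2)),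
     max (max (p.1 / q.1) (p.1 / q.2)) (max (p.2 / q.1) (p.2 / q.2)))

/-- An interval affine form `i₀ + Σₖ iₖ×Vₖ` whose constant and coefficient
intervals have extended-real bounds. -/
structure AffForm (n : ℕ) where
  const : EItv
  coeff : Fin n → EItv

/-- Semantics of an interval affine form in the environment `ρ`:
`{ c₀ + Σₖ cₖ·ρ(Vₖ) | ∀j, cⱼ real, cⱼ within the j-th interval }`. -/
def AffForm.sem {n : ℕ} (l : AffForm n) (ρ : Fin n → ℝ) : Set ℝ :=
  {x | ∃ (c₀ : ℝ) (c : Fin n → ℝ),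
        (l.const.1 ≤ (c₀ : EReal) ∧ (c₀ : EReal) ≤ l.const.2) ∧
        (∀ k, (l.coeff k).1 ≤ (c k : EReal) ∧ (c k : EReal) ≤ (l.coeff k).2) ∧
        x = c₀ + ∑ k, c k * ρ k}

/-- `l₁ ⊞ l₂`: componentwise interval addition of affine forms. -/
noncomputable def AffForm.add {n : ℕ} (l m : AffForm n) : AffForm n :=
  ⟨iadd l.const m.const, fun k => iadd (l.coeff k) (m.coeff k)⟩

/-- `l₁ ⊟ l₂`: componentwise interval subtraction of affine forms. -/
noncomputable def AffForm.sub {n : ℕ} (l m : AffForm n) : AffForm n :=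
  ⟨isub l.const m.const, fun k => isub (l.coeff k) (m.coeff k)⟩

/-- `i ⊠ l`: multiplication of every interval of `l` by the interval `i`. -/
noncomputable def AffForm.smul {n : ℕ} (i : EItv) (l : AffForm n) : AffForm n :=
  ⟨imul i l.const, fun k => imul i (l.coeff k)⟩

/-- `l ⊘ i`: division of every interval of `l` by the interval `i`. -/
noncomputable def AffForm.div {n : ℕ} (l : AffForm n) (i : EItv) : AffForm n :=
  ⟨idiv l.const i, fun k => idiv (l.coeff k) i⟩

/-- Intervalization `ι(l)(B) = i₀ +ᴵ Σᴵₖ (iₖ ×ᴵ [loₖ,hiₖ])`: evaluation of the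
affine form `l` to a single interval using interval arithmetic and the
variable bounds `B`. -/
noncomputable def AffForm.iota {n : ℕ} (l : AffForm n) (B : Fin n → ℝ × ℝ) :
    EItv :=
  (l.const.1 + ∑ k, (imul (l.coeff k) (((B k).1 : EReal), ((B k).2 : EReal))).1,
   l.const.2 + ∑ k, (imul (l.coeff k) (((B k).1 : EReal), ((B k).2 : EReal))).2)

/-- The linearization `⌊e⌋(B)` of an expression `e` under the variable bounds
`B`, defined by structural induction: `⌊V⌋ = [1,1]×V`; `⌊[a,b]⌋ = [a,b]`;
`+`/`−` map to `⊞`/`⊟`; `⌊e₁/e₂⌋ = ⌊e₁⌋ ⊘ ι(⌊e₂⌋)(B)`; and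
`⌊e₁×e₂⌋ = ι(⌊e₁⌋)(B) ⊠ ⌊e₂⌋` (the left argument is intervalized). -/
noncomputable def lin {n : ℕ} (B : Fin n → ℝ × ℝ) : Expr n → AffForm n
  | .var X => ⟨(0, 0), fun k => if k = X then (1, 1) else (0, 0)⟩
  | .itv a b => ⟨((a : EReal), (b : EReal)), fun _ => (0, 0)⟩
  | .add e₁ e₂ => (lin B e₁).add (lin B e₂)
  | .sub e₁ e₂ => (lin B e₁).sub (lin B e₂)
  | .mul e₁ e₂ => AffForm.smul ((lin B e₁).iota B) (lin B e₂)
  | .div e₁ e₂ => (lin B e₁).div ((lin B e₂).iota B)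

lemma coe_sum_ereal {α : Type*} (s : Finset α) (f : α → ℝ) :
    ((∑ k ∈ s, f k : ℝ) : EReal) = ∑ k ∈ s, (f k : EReal) := by
  induction s using Finset.cons_induction with
  | empty => simp
  | cons a s ha ih => rw [Finset.sum_cons, Finset.sum_cons, EReal.coe_add, ih]

lemma ll_mul_mem_aux (a c d : EReal) (y : ℝ) (hcy : c ≤ (y : EReal)) (hyd : (y : EReal) ≤ d) :
    min (a * c) (a * d) ≤ a * (y : EReal) ∧ a * (y : EReal) ≤ max (a * c) (a * d) := by
  rcases le_total 0 a with ha | ha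
  · exact ⟨(min_le_left _ _).trans (mul_le_mul_of_nonneg_left hcy ha),
      (mul_le_mul_of_nonneg_left hyd ha).trans (le_max_right _ _)⟩
  · have key : ∀ u v : EReal, u ≤ v → a * v ≤ a * u := by
      intro u v huv
      have hna : (0 : EReal) ≤ -a := by
        have := EReal.neg_le_neg_iff.mpr ha
        rwa [neg_zero] at this
      have h := mul_le_mul_of_nonneg_left huv hna
      rw [neg_mul, neg_mul] at h
      exact EReal.neg_le_neg_iff.mp h
    exact ⟨(min_le_right _ _).trans (key _ _ hyd),
      (key _ _ hcy).trans (le_max_left _ _)⟩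

lemma imul_mem (p q : EItv) (x y : ℝ)
    (h1 : p.1 ≤ (x : EReal)) (h2 : (x : EReal) ≤ p.2)
    (h3 : q.1 ≤ (y : EReal)) (h4 : (y : EReal) ≤ q.2) :
    (imul p q).1 ≤ ((x * y : ℝ) : EReal) ∧ ((x * y : ℝ) : EReal) ≤ (imul p q).2 := by
  rw [EReal.coe_mul]
  obtain ⟨la, ua⟩ := ll_mul_mem_aux p.1 q.1 q.2 y h3 h4
  obtain ⟨lb, ub⟩ := ll_mul_mem_aux p.2 q.1 q.2 y h3 h4
  rcases le_total 0 y with hy | hy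
  · have hy' : (0 : EReal) ≤ (y : EReal) := by exact_mod_cast hy
    have m1 : p.1 * (y : EReal) ≤ (x : EReal) * y := mul_le_mul_of_nonneg_right h1 hy'
    have m2 : (x : EReal) * y ≤ p.2 * y := mul_le_mul_of_nonneg_right h2 hy'
    exact ⟨((min_le_left _ _).trans la).trans m1, m2.trans (ub.trans (le_max_right _ _))⟩
  · have hy' : (0 : EReal) ≤ ((-y : ℝ) : EReal) := by exact_mod_cast (neg_nonneg.mpr hy)
    have m1 : (x : EReal) * y ≤ p.1 * y := by
      have h := mul_le_mul_of_nonneg_right h1 hy'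
      rw [EReal.coe_neg, mul_neg, mul_neg] at h
      exact EReal.neg_le_neg_iff.mp h
    have m2 : p.2 * (y : EReal) ≤ (x : EReal) * y := by
      have h := mul_le_mul_of_nonneg_right h2 hy'
      rw [EReal.coe_neg, mul_neg, mul_neg] at h
      exact EReal.neg_le_neg_iff.mp h
    exact ⟨((min_le_right _ _).trans lb).trans m2, m1.trans (ua.trans (le_max_left _ _))⟩

lemma inv_mem (c d : EReal) (y : ℝ) (h : ¬(c ≤ 0 ∧ 0 ≤ d))
    (hcy : c ≤ (y : EReal)) (hyd : (y : EReal) ≤ d) :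
    d⁻¹ ≤ ((y⁻¹ : ℝ) : EReal) ∧ ((y⁻¹ : ℝ) : EReal) ≤ c⁻¹ := by
  rcases not_and_or.mp h with hc | hd
  · have hc' : (0 : EReal) < c := not_le.mp hc
    have hy : 0 < y := by exact_mod_cast hc'.trans_le hcy
    constructor
    · rcases eq_or_ne d ⊤ with rfl | hdt
      · rw [EReal.inv_top]
        exact_mod_cast inv_nonneg.mpr hy.le
      · have hdb : d ≠ ⊥ := fun hb => by
          rw [hb, le_bot_iff] at hyd; exact (EReal.coe_ne_bot y) hyd
        lift d to ℝ using ⟨hdt, hdb⟩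
        rw [← EReal.coe_inv]
        have : y ≤ d := by exact_mod_cast hyd
        exact_mod_cast one_div y ▸ one_div d ▸ one_div_le_one_div_of_le hy this
    · have hct : c ≠ ⊤ := (hcy.trans_lt (EReal.coe_lt_top y)).ne
      have hcb : c ≠ ⊥ := fun hb => by rw [hb] at hc'; simp at hc'
      lift c to ℝ using ⟨hct, hcb⟩
      have hc0 : 0 < c := by exact_mod_cast hc'
      have hcy' : c ≤ y := by exact_mod_cast hcy
      rw [← EReal.coe_inv]
      exact_mod_cast one_div c ▸ one_div y ▸ one_div_le_one_div_of_le hc0 hcy'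
  · have hd' : d < 0 := not_le.mp hd
    have hy : y < 0 := by exact_mod_cast hyd.trans_lt hd'
    constructor
    · have hdt : d ≠ ⊤ := ne_top_of_lt hd'
      have hdb : d ≠ ⊥ := fun hb => by
        rw [hb, le_bot_iff] at hyd; exact (EReal.coe_ne_bot y) hyd
      lift d to ℝ using ⟨hdt, hdb⟩
      have hd0 : d < 0 := by exact_mod_cast hd'
      have hyd' : y ≤ d := by exact_mod_cast hyd
      rw [← EReal.coe_inv]
      have : d⁻¹ ≤ y⁻¹ := by
        rw [← neg_le_neg_iff, ← inv_neg, ← inv_neg]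
        exact one_div (-d) ▸ one_div (-y) ▸
          one_div_le_one_div_of_le (neg_pos.mpr hd0) (neg_le_neg hyd')
      exact_mod_cast this
    · rcases eq_or_ne c ⊥ with rfl | hcb
      · rw [EReal.inv_bot]
        exact_mod_cast inv_nonpos.mpr hy.le
      · have hct : c ≠ ⊤ := fun ht => by
          rw [ht, top_le_iff] at hcy; exact (EReal.coe_ne_top y) hcy
        lift c to ℝ using ⟨hct, hcb⟩
        have hcy' : c ≤ y := by exact_mod_cast hcy
        rw [← EReal.coe_inv]
        have : y⁻¹ ≤ c⁻¹ := by
          rw [← neg_le_neg_iff, ← inv_neg, ← inv_neg]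
          exact one_div (-y) ▸ one_div (-c) ▸
            one_div_le_one_div_of_le (neg_pos.mpr hy) (neg_le_neg hcy')
        exact_mod_cast this

lemma idiv_mem (p i : EItv) (x y : ℝ)
    (h1 : p.1 ≤ (x : EReal)) (h2 : (x : EReal) ≤ p.2)
    (h3 : i.1 ≤ (y : EReal)) (h4 : (y : EReal) ≤ i.2) :
    (idiv p i).1 ≤ ((x / y : ℝ) : EReal) ∧ ((x / y : ℝ) : EReal) ≤ (idiv p i).2 := by
  unfold idiv
  split_ifs with h
  · exact ⟨bot_le, le_top⟩
  · obtain ⟨hl, hr⟩ := inv_mem i.1 i.2 y h h3 h4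
    obtain ⟨l, r⟩ := imul_mem (p.1, p.2) (i.2⁻¹, i.1⁻¹) x y⁻¹ h1 h2 hl hr
    simp only [imul] at l r
    rw [div_eq_mul_inv]
    have hdiv : ∀ a b : EReal, a / b = a * b⁻¹ := fun _ _ => rfl
    constructor
    · refine le_trans (le_of_eq ?_) l
      simp only [hdiv, min_comm (p.1 * i.1⁻¹) (p.1 * i.2⁻¹), min_comm (p.2 * i.1⁻¹) (p.2 * i.2⁻¹)]
    · refine le_trans r (le_of_eq ?_)
      simp only [hdiv, max_comm (p.1 * i.1⁻¹) (p.1 * i.2⁻¹), max_comm (p.2 * i.1⁻¹) (p.2 * i.2⁻¹)]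

lemma iota_mem {n : ℕ} (l : AffForm n) (B : Fin n → ℝ × ℝ) (ρ : Fin n → ℝ)
    (hρ : ∀ k, (B k).1 ≤ ρ k ∧ ρ k ≤ (B k).2) (x : ℝ) (hx : x ∈ l.sem ρ) :
    (l.iota B).1 ≤ (x : EReal) ∧ (x : EReal) ≤ (l.iota B).2 := by
  obtain ⟨c₀, c, ⟨h0l, h0r⟩, hc, rfl⟩ := hx
  have hk : ∀ k, (imul (l.coeff k) (((B k).1 : EReal), ((B k).2 : EReal))).1
        ≤ ((c k * ρ k : ℝ) : EReal)
      ∧ ((c k * ρ k : ℝ) : EReal)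
        ≤ (imul (l.coeff k) (((B k).1 : EReal), ((B k).2 : EReal))).2 := fun k =>
    imul_mem _ _ _ _ (hc k).1 (hc k).2 (EReal.coe_le_coe_iff.mpr (hρ k).1) (EReal.coe_le_coe_iff.mpr (hρ k).2)
  constructor
  · rw [EReal.coe_add, coe_sum_ereal]
    exact add_le_add h0l (Finset.sum_le_sum fun k _ => (hk k).1)
  · rw [EReal.coe_add, coe_sum_ereal]
    exact add_le_add h0r (Finset.sum_le_sum fun k _ => (hk k).2)

/-- linearization is sound. If `B` assigns to each variable `Vₖ`
an interval `[loₖ,hiₖ]` with `loₖ ≤ hiₖ`, then for every expression `e` and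
every environment `ρ` with `loₖ ≤ ρ(Vₖ) ≤ hiₖ` for all `k`,
`⟦e⟧(ρ) ⊆ ⟦⌊e⌋(B)⟧(ρ)`. -/
theorem linearization_sound {n : ℕ} (B : Fin n → ℝ × ℝ)
    (hB : ∀ k, (B k).1 ≤ (B k).2) (e : Expr n) (ρ : Fin n → ℝ)
    (hρ : ∀ k, (B k).1 ≤ ρ k ∧ ρ k ≤ (B k).2) :
    sem e ρ ⊆ (lin B e).sem ρ := by
  induction e with
  | var X =>
    intro z hz
    rcases hz with rfl
    refine ⟨0, fun k => if k = X then 1 else 0, by simp [lin], ?_, ?_⟩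
    · intro k
      by_cases h : k = X <;> simp [lin, h]
    · simp [Finset.sum_ite_eq, Finset.sum_ite_eq']
  | itv a b =>
    intro z hz
    exact ⟨z, fun _ => 0, ⟨by simp only [lin]; exact_mod_cast hz.1, by simp only [lin]; exact_mod_cast hz.2⟩,
      fun k => by simp [lin], by simp⟩
  | add e₁ e₂ ih₁ ih₂ =>
    rintro z ⟨x, hx, y, hy, rfl⟩
    obtain ⟨c₀, c, hc0, hc, rfl⟩ := ih₁ hx
    obtain ⟨d₀, d, hd0, hd, rfl⟩ := ih₂ hy
    refine ⟨c₀ + d₀, fun k => c k + d k, ?_, ?_, ?_⟩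
    · exact ⟨by rw [EReal.coe_add]; exact add_le_add hc0.1 hd0.1,
        by rw [EReal.coe_add]; exact add_le_add hc0.2 hd0.2⟩
    · intro k
      exact ⟨by rw [EReal.coe_add]; exact add_le_add (hc k).1 (hd k).1,
        by rw [EReal.coe_add]; exact add_le_add (hc k).2 (hd k).2⟩
    · simp only [add_mul, Finset.sum_add_distrib]
      ring
  | sub e₁ e₂ ih₁ ih₂ =>
    rintro z ⟨x, hx, y, hy, rfl⟩
    obtain ⟨c₀, c, hc0, hc, rfl⟩ := ih₁ hx
    obtain ⟨d₀, d, hd0, hd, rfl⟩ := ih₂ hy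
    refine ⟨c₀ - d₀, fun k => c k - d k, ?_, ?_, ?_⟩
    · exact ⟨by rw [EReal.coe_sub]; exact EReal.sub_le_sub hc0.1 hd0.2,
        by rw [EReal.coe_sub]; exact EReal.sub_le_sub hc0.2 hd0.1⟩
    · intro k
      exact ⟨by rw [EReal.coe_sub]; exact EReal.sub_le_sub (hc k).1 (hd k).2,
        by rw [EReal.coe_sub]; exact EReal.sub_le_sub (hc k).2 (hd k).1⟩
    · simp only [sub_mul, Finset.sum_sub_distrib]
      ring
  | mul e₁ e₂ ih₁ ih₂ =>
    rintro z ⟨x, hx, y, hy, rfl⟩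
    obtain ⟨hi1, hi2⟩ := iota_mem (lin B e₁) B ρ hρ x (ih₁ hx)
    obtain ⟨d₀, d, hd0, hd, rfl⟩ := ih₂ hy
    refine ⟨x * d₀, fun k => x * d k, ?_, ?_, ?_⟩
    · exact imul_mem _ _ _ _ hi1 hi2 hd0.1 hd0.2
    · exact fun k => imul_mem _ _ _ _ hi1 hi2 (hd k).1 (hd k).2
    · rw [mul_add, Finset.mul_sum]
      congr 1
      exact Finset.sum_congr rfl fun k _ => (mul_assoc _ _ _).symm
  | div e₁ e₂ ih₁ ih₂ =>
    rintro z ⟨x, hx, y, hy, hy0, rfl⟩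
    obtain ⟨hi1, hi2⟩ := iota_mem (lin B e₂) B ρ hρ y (ih₂ hy)
    obtain ⟨c₀, c, hc0, hc, rfl⟩ := ih₁ hx
    refine ⟨c₀ / y, fun k => c k / y, ?_, ?_, ?_⟩
    · exact idiv_mem _ _ _ _ hc0.1 hc0.2 hi1 hi2
    · exact fun k => idiv_mem _ _ _ _ (hc k).1 (hc k).2 hi1 hi2
    · have hsum : ∀ k, c k / y * ρ k = c k * ρ k / y := fun k => by ring
      simp_rw [hsum]
      rw [add_div, Finset.sum_div]
end

section
/- The coefficient-averaging abstraction μ is sound: let l = [a₀,b₀] + Σₖ [aₖ,bₖ]×Vₖ be an interval affine form over ℝ with finite bounds, let [loₖ, hiₖ] (loₖ ≤ hiₖ) be bounds for each variable, and define μ(l) := ([a₀,b₀] +ᴵ Σᴵₖ ([(aₖ−bₖ)/2, (bₖ−aₖ)/2] ×ᴵ [loₖ,hiₖ])) + Σₖ ((aₖ+bₖ)/2)×Vₖ. Then for every environment ρ : 𝒱 → ℝ with loₖ ≤ ρ(Vₖ) ≤ hiₖ for all k, ⟦l⟧(ρ) ⊆ ⟦μ(l)⟧(ρ). -/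
/-- Semantics of the interval affine form `[a₀,b₀] + Σₖ [aₖ,bₖ]×Vₖ` over ℝ in
the environment `ρ`: `{ c₀ + Σₖ cₖ·ρ(Vₖ) | ∀j, aⱼ ≤ cⱼ ≤ bⱼ }`. -/
def asem {n : ℕ} (a₀ b₀ : ℝ) (a b : Fin n → ℝ) (ρ : Fin n → ℝ) : Set ℝ :=
  {x | ∃ (c₀ : ℝ) (c : Fin n → ℝ),
        (a₀ ≤ c₀ ∧ c₀ ≤ b₀) ∧ (∀ k, a k ≤ c k ∧ c k ≤ b k) ∧
        x = c₀ + ∑ k, c k * ρ k}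

/-- Lower bound of the interval product `[a,b] ×ᴵ [a',b']`. -/
def imulLo (a b a' b' : ℝ) : ℝ :=
  min (min (a * a') (a * b')) (min (b * a') (b * b'))

/-- Upper bound of the interval product `[a,b] ×ᴵ [a',b']`. -/
def imulHi (a b a' b' : ℝ) : ℝ :=
  max (max (a * a') (a * b')) (max (b * a') (b * b'))

/-- Lower bound of the interval quotient `[a,b] /ᴵ [a',b']` (for `0 ∉ [a',b']`). -/
noncomputable def idivLo (a b a' b' : ℝ) : ℝ :=
  min (min (a / a') (a / b')) (min (b / a') (b / b'))

/-- Upper bound of the interval quotient `[a,b] /ᴵ [a',b']` (for `0 ∉ [a',b']`). -/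
noncomputable def idivHi (a b a' b' : ℝ) : ℝ :=
  max (max (a / a') (a / b')) (max (b / a') (b / b'))

lemma min_mul_le' (p lo hi r : ℝ) (hl : lo ≤ r) (hr : r ≤ hi) :
    min (p * lo) (p * hi) ≤ p * r := by
  rcases le_total 0 p with hp | hp
  · exact le_trans (min_le_left _ _) (by nlinarith)
  · exact le_trans (min_le_right _ _) (by nlinarith)

lemma le_max_mul' (p lo hi r : ℝ) (hl : lo ≤ r) (hr : r ≤ hi) :
    p * r ≤ max (p * lo) (p * hi) := by
  rcases le_total 0 p with hp | hp
  · exact le_trans (by nlinarith) (le_max_right _ _)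
  · exact le_trans (by nlinarith) (le_max_left _ _)

lemma imulLo_le (p q lo hi t r : ℝ) (hp : p ≤ t) (hq : t ≤ q)
    (hl : lo ≤ r) (hr : r ≤ hi) : imulLo p q lo hi ≤ t * r := by
  unfold imulLo
  rcases le_total 0 r with hr0 | hr0
  · exact le_trans (min_le_left _ _) (le_trans (min_mul_le' p lo hi r hl hr) (by nlinarith))
  · exact le_trans (min_le_right _ _) (le_trans (min_mul_le' q lo hi r hl hr) (by nlinarith))

lemma le_imulHi (p q lo hi t r : ℝ) (hp : p ≤ t) (hq : t ≤ q)
    (hl : lo ≤ r) (hr : r ≤ hi) : t * r ≤ imulHi p q lo hi := by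
  unfold imulHi
  rcases le_total 0 r with hr0 | hr0
  · exact le_trans (by nlinarith : t * r ≤ q * r)
      (le_trans (le_max_mul' q lo hi r hl hr) (le_max_right _ _))
  · exact le_trans (by nlinarith : t * r ≤ p * r)
      (le_trans (le_max_mul' p lo hi r hl hr) (le_max_left _ _))

/-- the coefficient-averaging abstraction `μ` is sound. `μ(l)`
replaces each variable coefficient interval `[aₖ,bₖ]` by its midpoint
`(aₖ+bₖ)/2` and enlarges the constant interval to
`[a₀,b₀] +ᴵ Σᴵₖ ([(aₖ−bₖ)/2, (bₖ−aₖ)/2] ×ᴵ [loₖ,hiₖ])`. For every environment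
`ρ` within the bounds, `⟦l⟧(ρ) ⊆ ⟦μ(l)⟧(ρ)`, where the semantics of an affine
form with scalar coefficients `cₖ` and interval constant part `i` is
`{ c + Σₖ cₖ·ρ(Vₖ) | c ∈ i }`. -/
theorem mu_sound {n : ℕ} (a₀ b₀ : ℝ) (a b lo hi : Fin n → ℝ)
    (h₀ : a₀ ≤ b₀) (h : ∀ k, a k ≤ b k) (hB : ∀ k, lo k ≤ hi k)
    (ρ : Fin n → ℝ) (hρ : ∀ k, lo k ≤ ρ k ∧ ρ k ≤ hi k) :
    asem a₀ b₀ a b ρ ⊆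
      {x | ∃ c : ℝ,
        a₀ + ∑ k, imulLo ((a k - b k) / 2) ((b k - a k) / 2) (lo k) (hi k)
            ≤ c ∧
        c ≤ b₀ + ∑ k, imulHi ((a k - b k) / 2) ((b k - a k) / 2) (lo k) (hi k) ∧
        x = c + ∑ k, ((a k + b k) / 2) * ρ k} := by
  rintro x ⟨c₀, c, ⟨h₀l, h₀u⟩, hc, rfl⟩
  refine ⟨c₀ + ∑ k, (c k - (a k + b k) / 2) * ρ k, ?_, ?_, ?_⟩
  · refine add_le_add h₀l (Finset.sum_le_sum fun k _ => ?_)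
    exact imulLo_le _ _ _ _ _ _ (by linarith [(hc k).1]) (by linarith [(hc k).2])
      (hρ k).1 (hρ k).2
  · refine add_le_add h₀u (Finset.sum_le_sum fun k _ => ?_)
    exact le_imulHi _ _ _ _ _ _ (by linarith [(hc k).1]) (by linarith [(hc k).2])
      (hρ k).1 (hρ k).2
  · rw [add_assoc, ← Finset.sum_add_distrib]
    congr 1
    exact Finset.sum_congr rfl fun k _ => by ring
end

section
/- Linearization is not monotonic in its expression argument: there exist a finite variable set 𝒱 containing a variable X, interval bounds B for the variables, and expressions e₁, e₂ such that ⟦e₁⟧(ρ) ⊆ ⟦e₂⟧(ρ) for every environment ρ within the bounds B, yet there is an environment ρ within B with ⟦⌊e₁⌋(B)⟧(ρ) ⊄ ⟦⌊e₂⌋(B)⟧(ρ). (A witness is e₁ = X/X and e₂ = [1,1] with X ranging over [1,2], for which ⌊X/X⌋(B) = [1/2,1]×X.) -/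
open scoped Classical

/-- linearization is not monotonic in its expression argument.
There exist a number of variables `n`, a variable `X`, variable bounds `B`,
and expressions `e₁, e₂` such that `⟦e₁⟧(ρ) ⊆ ⟦e₂⟧(ρ)` for every environment
`ρ` within the bounds `B`, yet for some environment `ρ` within `B` one has
`⟦⌊e₁⌋(B)⟧(ρ) ⊄ ⟦⌊e₂⌋(B)⟧(ρ)`. (A witness is `e₁ = X/X` and `e₂ = [1,1]`
with `X` ranging over `[1,2]`.) -/
theorem linearization_not_monotone :
    ∃ (n : ℕ) (_X : Fin n) (B : Fin n → ℝ × ℝ) (e₁ e₂ : Expr n),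
      (∀ k, (B k).1 ≤ (B k).2) ∧
      (∀ ρ : Fin n → ℝ, (∀ k, (B k).1 ≤ ρ k ∧ ρ k ≤ (B k).2) →
        sem e₁ ρ ⊆ sem e₂ ρ) ∧
      (∃ ρ : Fin n → ℝ, (∀ k, (B k).1 ≤ ρ k ∧ ρ k ≤ (B k).2) ∧
        ¬ (lin B e₁).sem ρ ⊆ (lin B e₂).sem ρ) := by
  refine ⟨1, (0 : Fin 1), fun _ => (1, 2), (Expr.div (.var 0) (.var 0) : Expr 1), .itv 1 1, ?_, ?_, ?_⟩
  · intro k; norm_num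
  · intro ρ hρ z hz
    obtain ⟨x, hx, y, hy, hy0, hz⟩ := hz
    simp only [sem, Set.mem_singleton_iff] at hx hy
    subst hx; subst hy; subst hz
    have := (hρ 0).1
    simp only [sem, Set.mem_Icc]
    rw [div_self hy0]; norm_num
  · refine ⟨fun _ => 2, by norm_num, ?_⟩
    intro h
    set B' : Fin 1 → ℝ × ℝ := fun _ => ((1:ℝ), (2:ℝ)) with hB'
    have hvar : lin B' (Expr.var 0) =
        ⟨(0, 0), fun k => if k = 0 then (1, 1) else (0, 0)⟩ := rfl
    have hiota : (lin B' (Expr.var 0)).iota B' = ((1 : EReal), (2 : EReal)) := by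
      rw [hvar]
      simp only [AffForm.iota, imul, Fin.sum_univ_one]
      norm_num
      refine ⟨?_, max_eq_right ?_⟩ <;> exact_mod_cast (by norm_num : (1:ℝ) ≤ 2)
    have hlin : lin B' (Expr.div (.var 0) (.var 0)) =
        (lin B' (Expr.var 0)).div ((1 : EReal), (2 : EReal)) := by
      show (lin B' (Expr.var 0)).div ((lin B' (Expr.var 0)).iota B') = _
      rw [hiota]
    have h2 : (2:ℝ) ∈ (lin B' (Expr.div (.var 0) (.var 0))).sem (fun _ => 2) := by
      rw [hlin, hvar]
      refine ⟨0, fun _ => 1, ?_, ?_, by simp⟩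
      · simp only [AffForm.div, idiv]
        split_ifs with hif
        · exact absurd hif.1 (by norm_num)
        · norm_num
      · intro k
        have hk : k = 0 := Subsingleton.elim k 0
        subst hk
        simp only [AffForm.div, idiv, if_pos rfl]
        split_ifs with hif
        · exact absurd hif.1 (by norm_num)
        · constructor
          · refine le_trans (min_le_of_left_le (min_le_left _ _)) ?_
            norm_num
          · refine le_trans ?_ (le_max_of_le_left (le_max_left _ _))
            norm_num
    have h3 := h h2
    obtain ⟨c₀, c, ⟨hc1, hc2⟩, hc, hx⟩ := h3
    simp only [lin] at hc1 hc2 hc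
    have hc0 : c₀ = 1 := by exact_mod_cast le_antisymm (by exact_mod_cast hc2) (by exact_mod_cast hc1)
    have hck : c 0 = 0 := by
      have := hc 0
      exact_mod_cast le_antisymm (by exact_mod_cast this.2) (by exact_mod_cast this.1)
    rw [Fin.sum_univ_one, hc0, hck] at hx
    norm_num at hx
end
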